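/- Let C ≤ F_q^{n×m} be a rank-metric code and V_1,…,V_ℓ ≤ F_q^n. With Z_V the random variable on C/C(V^⊥) induced by the uniform distribution on C, the joint entropy H(Z_{V_1},…,Z_{V_ℓ}) equals H(Z_{V_1+⋯+V_ℓ}). -/

import Mathlib

open Module

variable {K : Type} [Field K] [Fintype K] {n m : ℕ}

/-- Orthogonal complement w.r.t. the standard symmetric bilinear form on `Fin n → K`. -/
def stdPerp (V : Submodule K (Fin n → K)) : Submodule K (Fin n → K) where
  carrier := {w | ∀ v ∈ V, ∑ i, v i * w i = 0}
  zero_mem' := by intro v hv; simp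
  add_mem' := by
    intro a b ha hb v hv
    simp [Pi.add_apply, mul_add, Finset.sum_add_distrib, ha v hv, hb v hv]
  smul_mem' := by
    intro c a ha v hv
    simp only [Pi.smul_apply, smul_eq_mul, mul_left_comm, ← Finset.mul_sum, ha v hv, mul_zero]

/-- Matrices all of whose columns lie in `V` (i.e. with column space contained in `V`). -/
def colIn (m : ℕ) (V : Submodule K (Fin n → K)) : Submodule K (Matrix (Fin n) (Fin m) K) where
  carrier := {X | ∀ j, (fun i => X i j) ∈ V}
  zero_mem' := by
    intro j
    show (fun i => (0 : Matrix (Fin n) (Fin m) K) i j) ∈ V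
    simp only [Matrix.zero_apply]
    exact V.zero_mem
  add_mem' := by
    intro a b ha hb j
    exact V.add_mem (ha j) (hb j)
  smul_mem' := by
    intro c X hX j
    exact V.smul_mem c (hX j)

/-- The shortened subcode `C(W) = {X ∈ C : colsp X ≤ W}`. -/
def shortened (C : Submodule K (Matrix (Fin n) (Fin m) K))
    (W : Submodule K (Fin n → K)) : Submodule K (Matrix (Fin n) (Fin m) K) :=
  C ⊓ colIn m W

/-- The `q`-polymatroid rank function `ρ_C(V) = (dim C − dim C(V^⊥))/m`. -/
noncomputable def rhoCode (C : Submodule K (Matrix (Fin n) (Fin m) K))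
    (V : Submodule K (Fin n → K)) : ℚ :=
  ((finrank K C : ℚ) - (finrank K (shortened C (stdPerp V)) : ℚ)) / m

/-- The trace-dual code `C^⊥ = {X : tr(X Yᵀ) = 0 for all Y ∈ C}`. -/
def dualCode (C : Submodule K (Matrix (Fin n) (Fin m) K)) :
    Submodule K (Matrix (Fin n) (Fin m) K) where
  carrier := {X | ∀ Y ∈ C, ∑ i, ∑ j, X i j * Y i j = 0}
  zero_mem' := by intro Y hY; simp
  add_mem' := by
    intro a b ha hb Y hY
    simp [Matrix.add_apply, add_mul, Finset.sum_add_distrib, ha Y hY, hb Y hY]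
  smul_mem' := by
    intro c X hX Y hY
    simp only [Matrix.smul_apply, smul_eq_mul, mul_assoc, ← Finset.mul_sum, hX Y hY, mul_zero]

/-- Shannon entropy of the push-forward of the uniform distribution on the code `C`
along a map `f` (mass of `y` is `#f⁻¹(y)/#C`).  Applied to a tuple-valued map this is
exactly the joint entropy of the component random variables. -/
noncomputable def entropyMap (C : Submodule K (Matrix (Fin n) (Fin m) K))
    {α : Type} (f : C → α) : ℝ :=
  ∑ᶠ y : α, Real.negMulLog ((Nat.card {x : C // f x = y} : ℝ) / (Nat.card C : ℝ))

lemma mem_stdPerp_iSup_iff {ι : Type} (V : ι → Submodule K (Fin n → K)) (w : Fin n → K) :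
    w ∈ stdPerp (⨆ i, V i) ↔ ∀ i, w ∈ stdPerp (V i) := by
  constructor
  · intro h i v hv
    exact h v (Submodule.mem_iSup_of_mem i hv)
  · intro h v hv
    let φ : (Fin n → K) →ₗ[K] K :=
      { toFun := fun v => ∑ i, v i * w i
        map_add' := by
          intro a b
          simp [Pi.add_apply, add_mul, Finset.sum_add_distrib]
        map_smul' := by
          intro c a
          simp [Finset.mul_sum, mul_assoc] }
    have : (⨆ i, V i) ≤ LinearMap.ker φ := by
      refine iSup_le fun i => ?_
      intro v hv
      exact h i v hv
    exact this hv

/-- Entropy of a push-forward only depends on the fibration structure of the map. -/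
lemma entropyMap_congr (C : Submodule K (Matrix (Fin n) (Fin m) K)) {α β : Type}
    (f : C → α) (g : C → β) (h : ∀ x y : C, f x = f y ↔ g x = g y) :
    entropyMap C f = entropyMap C g := by
  classical
  set N : ℝ := (Nat.card C : ℝ) with hN
  set F : α → ℝ := fun y => Real.negMulLog ((Nat.card {x : C // f x = y} : ℝ) / N) with hF
  set G : β → ℝ := fun z => Real.negMulLog ((Nat.card {x : C // g x = z} : ℝ) / N) with hG
  have hFrange : ∀ y, y ∉ Set.range f → F y = 0 := by
    intro y hy
    have he : IsEmpty {x : C // f x = y} := ⟨fun ⟨x, hx⟩ => hy ⟨x, hx⟩⟩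
    have hc : Nat.card {x : C // f x = y} = 0 := @Nat.card_of_isEmpty _ he
    simp only [hF, hc, Nat.cast_zero, zero_div, Real.negMulLog_zero]
  have hGrange : ∀ z, z ∉ Set.range g → G z = 0 := by
    intro z hz
    have he : IsEmpty {x : C // g x = z} := ⟨fun ⟨x, hx⟩ => hz ⟨x, hx⟩⟩
    have hc : Nat.card {x : C // g x = z} = 0 := @Nat.card_of_isEmpty _ he
    simp only [hG, hc, Nat.cast_zero, zero_div, Real.negMulLog_zero]
  have key : ∀ x : C, F (f x) = G (g x) := by
    intro x
    have hc : Nat.card {z : C // f z = f x} = Nat.card {z : C // g z = g x} :=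
      Nat.card_congr (Equiv.subtypeEquivRight fun z => h z x)
    simp only [hF, hG, hc]
  let e : α → β := fun y => if hy : ∃ x, f x = y then g hy.choose else g 0
  have he : ∀ x : C, e (f x) = g x := by
    intro x
    have hy : ∃ z, f z = f x := ⟨x, rfl⟩
    simp only [e, dif_pos hy]
    exact (h _ x).mp hy.choose_spec
  have hFG : ∀ y ∈ Set.range f, F y = G (e y) := by
    rintro y ⟨x, rfl⟩
    rw [he x]
    exact key x
  have hsuppF : Function.support F ⊆ Set.range f := fun y hy => by
    by_contra hc; exact hy (hFrange y hc)
  have hsuppG : Function.support G ⊆ Set.range g := fun z hz => by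
    by_contra hc; exact hz (hGrange z hc)
  have hbij : Set.BijOn e (Function.support F) (Function.support G) := by
    refine ⟨?_, ?_, ?_⟩
    · intro y hy
      have hyr := hsuppF hy
      have := hFG y hyr
      simpa [Function.mem_support, ← this] using hy
    · intro y1 h1 y2 h2 hee
      obtain ⟨x1, rfl⟩ := hsuppF h1
      obtain ⟨x2, rfl⟩ := hsuppF h2
      rw [he x1, he x2] at hee
      exact (h x1 x2).mpr hee
    · intro z hz
      obtain ⟨x, rfl⟩ := hsuppG hz
      refine ⟨f x, ?_, he x⟩
      have : F (f x) = G (g x) := key x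
      simpa [Function.mem_support, this] using hz
  have h1 : ∑ᶠ y, F y = ∑ᶠ y ∈ Function.support F, F y := by
    rw [← finsum_mem_univ F, ← Set.univ_inter (Function.support F),
      finsum_mem_inter_support F Set.univ]
  have h2 : ∑ᶠ z, G z = ∑ᶠ z ∈ Function.support G, G z := by
    rw [← finsum_mem_univ G, ← Set.univ_inter (Function.support G),
      finsum_mem_inter_support G Set.univ]
  have h3 : ∑ᶠ y ∈ Function.support F, F y = ∑ᶠ z ∈ Function.support G, G z :=
    finsum_mem_eq_of_bijOn e hbij fun y hy => hFG y (hsuppF hy)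
  show ∑ᶠ y, F y = ∑ᶠ z, G z
  rw [h1, h3, h2]

/-- the joint entropy `H(Z_{V_1},…,Z_{V_ℓ})` equals `H(Z_{V_1+⋯+V_ℓ})`. -/
theorem joint_entropy_eq_entropy_sup (hm : 0 < m) {ℓ : ℕ}
    (C : Submodule K (Matrix (Fin n) (Fin m) K)) (V : Fin ℓ → Submodule K (Fin n → K)) :
    entropyMap C
        (fun x i => ((shortened C (stdPerp (V i))).comap C.subtype).mkQ x)
      = entropyMap C (⇑((shortened C (stdPerp (⨆ i, V i))).comap C.subtype).mkQ) := by
  apply entropyMap_congr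
  intro x y
  have hmem : ∀ z : C, (∀ i, z ∈ (shortened C (stdPerp (V i))).comap C.subtype) ↔
      z ∈ (shortened C (stdPerp (⨆ i, V i))).comap C.subtype := by
    intro z
    simp only [Submodule.mem_comap, shortened, Submodule.mem_inf, Submodule.coe_subtype]
    constructor
    · intro hz
      refine ⟨z.2, fun j => ?_⟩
      rw [mem_stdPerp_iSup_iff]
      intro i
      exact (hz i).2 j
    · intro hz i
      refine ⟨z.2, fun j => ?_⟩
      exact (mem_stdPerp_iSup_iff V _).mp (hz.2 j) i
  constructor
  · intro hxy
    rw [Submodule.mkQ_apply, Submodule.mkQ_apply, Submodule.Quotient.eq]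
    rw [← hmem]
    intro i
    have := congrFun hxy i
    rw [Submodule.mkQ_apply, Submodule.mkQ_apply, Submodule.Quotient.eq] at this
    exact this
  · intro hxy
    funext i
    rw [Submodule.mkQ_apply, Submodule.mkQ_apply, Submodule.Quotient.eq]
    rw [Submodule.mkQ_apply, Submodule.mkQ_apply, Submodule.Quotient.eq] at hxy
    exact (hmem _).mpr hxy i
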